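/- arXiv:1307.7370 — 2 statements merged into one kernel-verified Lean document; each statement's English description precedes it below -/
import Mathlib

section
/- For any nonzero real number a and any positive integer n, ∑_{k=1}^{n} C(2n,2k) 2^{2k} E_{2n-2k,a} = 2/a + (2-4a)/a^2 · E_{2n,a}. -/
open Finset

noncomputable def E (a : ℝ) : ℕ → ℝ
  | 0 => 1
  | n + 1 =>
      -a * ∑ k ∈ (Finset.Icc 1 ((n + 1) / 2)).attach,
        ((n + 1).choose (2 * k.1) : ℝ) * E a (n + 1 - 2 * k.1)
  decreasing_by
    have h := Finset.mem_Icc.mp k.2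
    omega

noncomputable def EP (a : ℝ) (n : ℕ) (x : ℝ) : ℝ :=
  ∑ k ∈ Finset.range (n + 1), (n.choose k : ℝ) * E a k * x ^ (n - k)

lemma E_rec (a : ℝ) (m : ℕ) (hm : 1 ≤ m) :
    E a (2 * m) = -a * ∑ k ∈ Finset.Icc 1 m, ((2 * m).choose (2 * k) : ℝ) * E a (2 * m - 2 * k) := by
  obtain ⟨m, rfl⟩ := Nat.exists_eq_add_of_le hm
  have h : 2 * (1 + m) = (2 * m + 1) + 1 := by ring
  rw [h, E]
  rw [Finset.sum_attach (Finset.Icc 1 ((2 * m + 1 + 1) / 2))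
    (fun k => ((2 * m + 1 + 1).choose (2 * k) : ℝ) * E a (2 * m + 1 + 1 - 2 * k))]
  have h2 : (2 * m + 1 + 1) / 2 = 1 + m := by omega
  rw [h2, ← h]

lemma evensum (k : ℕ) (hk : 1 ≤ k) :
    2 * ∑ j ∈ range (k + 1), ((2 * k).choose (2 * j) : ℝ) = 2 ^ (2 * k) := by
  have h1 : ∑ i ∈ range (2 * k + 1), ((2 * k).choose i : ℝ) = 2 ^ (2 * k) := by
    exact_mod_cast congrArg (Nat.cast : ℕ → ℝ) (Nat.sum_range_choose (2 * k))
  have h2 : ∑ i ∈ range (2 * k + 1), (-1 : ℝ) ^ i * ((2 * k).choose i) = 0 := by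
    exact_mod_cast congrArg (Int.cast : ℤ → ℝ)
      (Int.alternating_sum_range_choose_of_ne (show 2 * k ≠ 0 by omega))
  have key : ∑ i ∈ range (2 * k + 1), ((1 + (-1 : ℝ) ^ i) * ((2 * k).choose i)) = 2 ^ (2 * k) := by
    simp only [add_mul, one_mul, Finset.sum_add_distrib, h1, h2, add_zero]
  have hinj : ∀ x ∈ range (k + 1), ∀ y ∈ range (k + 1), 2 * x = 2 * y → x = y := by
    intro x _ y _ h; omega
  have himg : ∑ j ∈ range (k + 1), ((1 + (-1 : ℝ) ^ (2 * j)) * ((2 * k).choose (2 * j)))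
      = ∑ i ∈ (range (k + 1)).image (fun j => 2 * j),
          ((1 + (-1 : ℝ) ^ i) * ((2 * k).choose i)) := by
    rw [Finset.sum_image hinj]
  have hsub : ∑ i ∈ (range (k + 1)).image (fun j => 2 * j),
      ((1 + (-1 : ℝ) ^ i) * ((2 * k).choose i))
      = ∑ i ∈ range (2 * k + 1), ((1 + (-1 : ℝ) ^ i) * ((2 * k).choose i)) := by
    apply Finset.sum_subset
    · intro i hi
      simp only [Finset.mem_image, Finset.mem_range] at hi ⊢
      obtain ⟨j, hj, rfl⟩ := hi; omega
    · intro i hi2 hi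
      have hodd : Odd i := by
        rcases Nat.even_or_odd i with he | ho
        · exfalso; obtain ⟨j, rfl⟩ := he
          apply hi
          simp only [Finset.mem_image, Finset.mem_range]
          simp only [Finset.mem_range] at hi2
          exact ⟨j, by omega, by omega⟩
        · exact ho
      rw [hodd.neg_one_pow]; ring
  have h3 : ∑ j ∈ range (k + 1), ((1 + (-1 : ℝ) ^ (2 * j)) * ((2 * k).choose (2 * j)))
      = 2 * ∑ j ∈ range (k + 1), ((2 * k).choose (2 * j) : ℝ) := by
    rw [Finset.mul_sum]
    apply Finset.sum_congr rfl
    intro j _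
    rw [pow_mul]
    norm_num
  rw [← h3, himg, hsub, key]

theorem stmt7 (a : ℝ) (ha : a ≠ 0) (n : ℕ) (hn : 1 ≤ n) :
    ∑ k ∈ Finset.Icc 1 n, ((2 * n).choose (2 * k) : ℝ) * 2 ^ (2 * k) * E a (2 * n - 2 * k) =
      2 / a + (2 - 4 * a) / a ^ 2 * E a (2 * n) := by
  -- sum form of the recurrence
  have hS : ∀ m : ℕ, 1 ≤ m →
      ∑ k ∈ Finset.Icc 1 m, ((2 * m).choose (2 * k) : ℝ) * E a (2 * m - 2 * k)
        = -(E a (2 * m)) / a := by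
    intro m hm
    have h := E_rec a m hm
    field_simp
    linarith [h]
  -- full sum including k = 0
  have hins : ∀ m : ℕ, range (m + 1) = insert 0 (Finset.Icc 1 m) := by
    intro m; ext i; simp [Finset.mem_Icc, Nat.lt_succ_iff]; omega
  have hfull : ∀ m : ℕ, 1 ≤ m →
      ∑ t ∈ range (m + 1), ((2 * m).choose (2 * t) : ℝ) * E a (2 * m - 2 * t)
        = E a (2 * m) - E a (2 * m) / a := by
    intro m hm
    rw [hins m, Finset.sum_insert (by simp), hS m hm]
    norm_num
    ring
  -- the double-sum kernel
  set F : ℕ → ℕ → ℝ := fun k j =>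
    if j ≤ k then ((2 * n).choose (2 * j) : ℝ) * ((2 * (n - j)).choose (2 * (k - j)))
      * E a (2 * n - 2 * k) else 0 with hF
  -- Step A
  have stepA : ∀ k ∈ Finset.Icc 1 n,
      ((2 * n).choose (2 * k) : ℝ) * 2 ^ (2 * k) * E a (2 * n - 2 * k)
        = 2 * ∑ j ∈ range (n + 1), F k j := by
    intro k hk
    rw [Finset.mem_Icc] at hk
    have hsub : ∑ j ∈ range (n + 1), F k j = ∑ j ∈ range (k + 1), F k j := by
      symm
      apply Finset.sum_subset
      · intro j hj; simp only [Finset.mem_range] at hj ⊢; omega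
      · intro j _ hj
        simp only [Finset.mem_range] at hj
        rw [hF]
        simp only
        rw [if_neg (by omega)]
    have hterm : ∀ j ∈ range (k + 1),
        F k j = ((2 * n).choose (2 * k) : ℝ) * ((2 * k).choose (2 * j))
          * E a (2 * n - 2 * k) := by
      intro j hj
      simp only [Finset.mem_range] at hj
      have hjk : j ≤ k := by omega
      rw [hF]
      simp only
      rw [if_pos hjk]
      have := Nat.choose_mul (n := 2 * n) (show 2 * j ≤ 2 * k by omega)
      have e1 : 2 * n - 2 * j = 2 * (n - j) := by omega
      have e2 : 2 * k - 2 * j = 2 * (k - j) := by omega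
      rw [e1, e2] at this
      have := congrArg (Nat.cast : ℕ → ℝ) this
      push_cast at this
      rw [← this]
    rw [hsub, Finset.sum_congr rfl hterm]
    have : ∑ j ∈ range (k + 1), ((2 * n).choose (2 * k) : ℝ) * ((2 * k).choose (2 * j))
          * E a (2 * n - 2 * k)
        = ((2 * n).choose (2 * k) : ℝ) * E a (2 * n - 2 * k)
          * ∑ j ∈ range (k + 1), ((2 * k).choose (2 * j) : ℝ) := by
      rw [Finset.mul_sum]; apply Finset.sum_congr rfl; intro j _; ring
    rw [this]
    rw [← evensum k hk.1]
    ring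
  -- Step C : inner sums after swapping
  have stepC0 : ∑ k ∈ Finset.Icc 1 n, F k 0 = -(E a (2 * n)) / a := by
    rw [← hS n hn]
    apply Finset.sum_congr rfl
    intro k hk
    rw [Finset.mem_Icc] at hk
    rw [hF]
    simp only
    rw [if_pos (by omega)]
    simp
  have stepCj : ∀ j ∈ Finset.Icc 1 n,
      ∑ k ∈ Finset.Icc 1 n, F k j
        = ((2 * n).choose (2 * j) : ℝ) *
          (if n - j = 0 then 1 else E a (2 * (n - j)) - E a (2 * (n - j)) / a) := by
    intro j hj
    rw [Finset.mem_Icc] at hj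
    have hsub : ∑ k ∈ Finset.Icc 1 n, F k j = ∑ k ∈ Finset.Icc j n, F k j := by
      symm
      apply Finset.sum_subset
      · intro k hk; rw [Finset.mem_Icc] at hk ⊢; omega
      · intro k hk hk2
        rw [Finset.mem_Icc] at hk; rw [Finset.mem_Icc] at hk2
        rw [hF]; simp only
        rw [if_neg (by omega)]
    rw [hsub, ← Finset.Ico_add_one_right_eq_Icc, Finset.sum_Ico_eq_sum_range]
    have hrange : n + 1 - j = (n - j) + 1 := by omega
    rw [hrange]
    have hterm : ∀ i ∈ range ((n - j) + 1),
        F (j + i) j = ((2 * n).choose (2 * j) : ℝ)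
          * (((2 * (n - j)).choose (2 * i) : ℝ) * E a (2 * (n - j) - 2 * i)) := by
      intro i hi
      simp only [Finset.mem_range] at hi
      rw [hF]; simp only
      rw [if_pos (by omega)]
      have e1 : j + i - j = i := by omega
      have e2 : 2 * n - 2 * (j + i) = 2 * (n - j) - 2 * i := by omega
      rw [e1, e2]
      ring
    rw [Finset.sum_congr rfl hterm, ← Finset.mul_sum]
    congr 1
    by_cases hnj : n - j = 0
    · rw [if_pos hnj, hnj]
      simp [E]
    · rw [if_neg hnj, hfull (n - j) (by omega)]
  -- put it together
  rw [Finset.sum_congr rfl stepA, ← Finset.mul_sum, Finset.sum_comm]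
  have : ∑ j ∈ range (n + 1), ∑ k ∈ Finset.Icc 1 n, F k j
      = -(E a (2 * n)) / a
        + ∑ j ∈ Finset.Icc 1 n, ((2 * n).choose (2 * j) : ℝ) *
          (if n - j = 0 then 1 else E a (2 * (n - j)) - E a (2 * (n - j)) / a) := by
    rw [hins n, Finset.sum_insert (by simp), stepC0]
    congr 1
    exact Finset.sum_congr rfl stepCj
  rw [this]
  -- evaluate the remaining j-sum
  have hlast : ∑ j ∈ Finset.Icc 1 n, ((2 * n).choose (2 * j) : ℝ) *
      (if n - j = 0 then 1 else E a (2 * (n - j)) - E a (2 * (n - j)) / a)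
      = (1 - 1 / a) * (-(E a (2 * n)) / a) + 1 / a := by
    have hterm : ∀ j ∈ Finset.Icc 1 n,
        ((2 * n).choose (2 * j) : ℝ) *
          (if n - j = 0 then 1 else E a (2 * (n - j)) - E a (2 * (n - j)) / a)
        = (1 - 1 / a) * (((2 * n).choose (2 * j) : ℝ) * E a (2 * n - 2 * j))
          + (if j = n then 1 / a else 0) := by
      intro j hj
      rw [Finset.mem_Icc] at hj
      by_cases hjn : j = n
      · subst hjn
        rw [if_pos (by omega), if_pos rfl]
        have : 2 * j - 2 * j = 0 := by omega
        rw [this]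
        norm_num [E]
      · rw [if_neg (by omega), if_neg hjn]
        have : 2 * (n - j) = 2 * n - 2 * j := by omega
        rw [this]
        ring
    rw [Finset.sum_congr rfl hterm, Finset.sum_add_distrib, ← Finset.mul_sum, hS n hn,
      Finset.sum_ite_eq' (Finset.Icc 1 n) n (fun _ => 1 / a), if_pos (by simp [Finset.mem_Icc]; omega)]
  rw [hlast]
  field_simp
  ring
end

section
/- For any real number a with a ≠ 0 and a ≠ 1/2, and any positive integer n, E_{2n,a} = a/(2a-1) - (a^2 n)/(2(2a-1)) · ∑_{k=1}^{n} C(2n-1,2k-1) (4^k/k) E_{2n-2k,a}. -/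
open Finset

lemma E_succ (a : ℝ) (n : ℕ) :
    E a (n + 1) = -a * ∑ k ∈ Finset.Icc 1 ((n + 1) / 2),
      ((n + 1).choose (2 * k) : ℝ) * E a (n + 1 - 2 * k) := by
  rw [E]
  congr 1
  exact Finset.sum_attach _ (fun k => ((n + 1).choose (2 * k) : ℝ) * E a (n + 1 - 2 * k))

lemma E_odd (a : ℝ) (m : ℕ) : E a (2 * m + 1) = 0 := by
  induction m using Nat.strong_induction_on with
  | _ m ih =>
    rw [E_succ]
    have h2 : (2 * m + 1) / 2 = m := by omega
    rw [h2]
    have h3 : ∑ k ∈ Finset.Icc 1 m, ((2 * m + 1).choose (2 * k) : ℝ) * E a (2 * m + 1 - 2 * k) = 0 := by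
      apply Finset.sum_eq_zero
      intro k hk
      have hk' := Finset.mem_Icc.mp hk
      have h4 : 2 * m + 1 - 2 * k = 2 * (m - k) + 1 := by omega
      rw [h4, ih (m - k) (by omega)]
      ring
    rw [h3]; ring

lemma sum_range_succ_eq (f : ℕ → ℝ) (n : ℕ) :
    ∑ k ∈ Finset.range (n + 1), f k = f 0 + ∑ k ∈ Finset.Icc 1 n, f k := by
  rw [Finset.sum_range_succ' f n, ← Finset.Ico_add_one_right_eq_Icc, Finset.sum_Ico_eq_sum_range]
  simp [add_comm]

lemma E_even (a : ℝ) (n : ℕ) (hn : 1 ≤ n) :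
    E a (2 * n) = -a * ∑ k ∈ Finset.Icc 1 n, ((2 * n).choose (2 * k) : ℝ) * E a (2 * n - 2 * k) := by
  have h : 2 * n = (2 * n - 1) + 1 := by omega
  rw [h, E_succ]
  have h2 : (2 * n - 1 + 1) / 2 = n := by omega
  rw [h2, ← h]

noncomputable def Tn (a : ℝ) (n : ℕ) : ℝ :=
  ∑ k ∈ Finset.range (n + 1), ((2 * n).choose (2 * k) : ℝ) * E a (2 * n - 2 * k)

lemma Tn_zero (a : ℝ) : Tn a 0 = 1 := by simp [Tn, E]

lemma Tn_rec (a : ℝ) (n : ℕ) (hn : 1 ≤ n) : a * Tn a n = (a - 1) * E a (2 * n) := by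
  rw [Tn, sum_range_succ_eq]
  simp only [Nat.mul_zero, Nat.choose_zero_right, Nat.sub_zero, Nat.cast_one, one_mul]
  have he := E_even a n hn
  linear_combination he

lemma sum_even_part (g : ℕ → ℝ) (hodd : ∀ j, g (2 * j + 1) = 0) (l : ℕ) :
    ∑ i ∈ Finset.range (2 * l + 1), g i = ∑ k ∈ Finset.range (l + 1), g (2 * k) := by
  induction l with
  | zero => simp
  | succ l ih =>
    have h : 2 * (l + 1) + 1 = (2 * l + 1) + 1 + 1 := by ring
    rw [h, Finset.sum_range_succ, Finset.sum_range_succ, ih, hodd l]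
    have h2 : 2 * l + 1 + 1 = 2 * (l + 1) := by ring
    rw [h2, Finset.sum_range_succ _ (l + 1)]
    ring

lemma choose_even_sum (l : ℕ) (hl : 1 ≤ l) :
    ∑ k ∈ Finset.range (l + 1), ((2 * l).choose (2 * k) : ℝ) = 4 ^ l / 2 := by
  have h1 : ∑ i ∈ Finset.range (2 * l + 1), ((2 * l).choose i : ℝ) = 2 ^ (2 * l) := by
    exact_mod_cast congrArg (Nat.cast : ℕ → ℝ) (Nat.sum_range_choose (2 * l))
  have h2 : ∑ i ∈ Finset.range (2 * l + 1), (-1 : ℝ) ^ i * ((2 * l).choose i : ℝ) = 0 := by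
    have := Int.alternating_sum_range_choose_of_ne (n := 2 * l) (by omega)
    exact_mod_cast congrArg (Int.cast : ℤ → ℝ) this
  have h3 := sum_even_part (fun i => ((2 * l).choose i : ℝ) + (-1 : ℝ) ^ i * ((2 * l).choose i : ℝ))
    (fun j => by
      have : (-1 : ℝ) ^ (2 * j + 1) = -1 := by
        rw [pow_succ, pow_mul]; norm_num
      simp only [this]; ring) l
  simp only [Finset.sum_add_distrib] at h3
  rw [h1, h2] at h3
  have h6 : ∑ x ∈ Finset.range (l + 1), (-1 : ℝ) ^ (2 * x) * ((2 * l).choose (2 * x) : ℝ)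
      = ∑ x ∈ Finset.range (l + 1), ((2 * l).choose (2 * x) : ℝ) := by
    apply Finset.sum_congr rfl
    intro k _
    rw [pow_mul]
    norm_num
  rw [h6] at h3
  have h5 : (2 : ℝ) ^ (2 * l) = 4 ^ l := by rw [pow_mul]; norm_num
  rw [h5] at h3
  linarith

lemma double_sum (a : ℝ) (n : ℕ) :
    ∑ k ∈ Finset.range (n + 1), ((2 * n).choose (2 * k) : ℝ) * Tn a (n - k) =
      E a (2 * n) + ∑ l ∈ Finset.Icc 1 n, ((2 * n).choose (2 * l) : ℝ) * (4 ^ l / 2) * E a (2 * n - 2 * l) := by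
  set f : ℕ → ℕ → ℝ := fun k j =>
    ((2 * n).choose (2 * k) : ℝ) * (((2 * (n - k)).choose (2 * j) : ℝ) * E a (2 * (n - k) - 2 * j)) with hf
  have step1 : ∑ k ∈ Finset.range (n + 1), ((2 * n).choose (2 * k) : ℝ) * Tn a (n - k)
      = ∑ k ∈ Finset.range (n + 1), ∑ j ∈ Finset.range (n + 1 - k), f k j := by
    apply Finset.sum_congr rfl
    intro k hk
    have hk' := Finset.mem_range.mp hk
    have hr : n + 1 - k = (n - k) + 1 := by omega
    rw [hr, Tn, Finset.mul_sum]
  rw [step1, ← Finset.sum_range_diag_flip (n + 1) f]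
  have step2 : ∀ m ∈ Finset.range (n + 1), ∑ k ∈ Finset.range (m + 1), f k (m - k)
      = (((2 * n).choose (2 * m) : ℝ) * E a (2 * n - 2 * m)) *
          ∑ k ∈ Finset.range (m + 1), ((2 * m).choose (2 * k) : ℝ) := by
    intro m hm
    have hm' := Finset.mem_range.mp hm
    rw [Finset.mul_sum]
    apply Finset.sum_congr rfl
    intro k hk
    have hk' := Finset.mem_range.mp hk
    have e1 : 2 * (n - k) - 2 * (m - k) = 2 * n - 2 * m := by omega
    have e2 : 2 * (n - k) = 2 * n - 2 * k := by omega
    have e3 : 2 * (m - k) = 2 * m - 2 * k := by omega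
    have hv : (2 * n).choose (2 * m) * (2 * m).choose (2 * k)
        = (2 * n).choose (2 * k) * (2 * n - 2 * k).choose (2 * m - 2 * k) :=
      Nat.choose_mul (by omega)
    have hv' : (((2 * n).choose (2 * m) : ℝ)) * ((2 * m).choose (2 * k) : ℝ)
        = ((2 * n).choose (2 * k) : ℝ) * ((2 * n - 2 * k).choose (2 * m - 2 * k) : ℝ) := by
      exact_mod_cast congrArg (Nat.cast : ℕ → ℝ) hv
    rw [hf]
    simp only []
    rw [e1, e2, e3]
    linear_combination (-(E a (2 * n - 2 * m))) * hv'
  rw [Finset.sum_congr rfl step2, sum_range_succ_eq]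
  have h0 : (((2 * n).choose (2 * 0) : ℝ) * E a (2 * n - 2 * 0)) *
      ∑ k ∈ Finset.range (0 + 1), ((2 * 0).choose (2 * k) : ℝ) = E a (2 * n) := by
    simp
  rw [h0]
  congr 1
  apply Finset.sum_congr rfl
  intro l hl
  have hl' := Finset.mem_Icc.mp hl
  rw [choose_even_sum l hl'.1]
  ring

lemma key1 (a : ℝ) (n : ℕ) (hn : 1 ≤ n) :
    a * ∑ k ∈ Finset.range (n + 1), ((2 * n).choose (2 * k) : ℝ) * Tn a (n - k)
      = a + (a - 1) * (Tn a n - 1) := by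
  rw [Finset.mul_sum, Finset.sum_range_succ]
  have hlast : a * (((2 * n).choose (2 * n) : ℝ) * Tn a (n - n)) = a := by
    simp [Tn_zero]
  rw [hlast]
  have hsum : ∑ k ∈ Finset.range n, a * (((2 * n).choose (2 * k) : ℝ) * Tn a (n - k))
      = (a - 1) * ∑ k ∈ Finset.range n, ((2 * n).choose (2 * k) : ℝ) * E a (2 * n - 2 * k) := by
    rw [Finset.mul_sum]
    apply Finset.sum_congr rfl
    intro k hk
    have hk' := Finset.mem_range.mp hk
    have ht := Tn_rec a (n - k) (by omega)
    have h2 : 2 * (n - k) = 2 * n - 2 * k := by omega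
    rw [h2] at ht
    linear_combination ((2 * n).choose (2 * k) : ℝ) * ht
  rw [hsum]
  have hT : ∑ k ∈ Finset.range n, ((2 * n).choose (2 * k) : ℝ) * E a (2 * n - 2 * k) = Tn a n - 1 := by
    have h : Tn a n = (∑ k ∈ Finset.range n, ((2 * n).choose (2 * k) : ℝ) * E a (2 * n - 2 * k))
        + ((2 * n).choose (2 * n) : ℝ) * E a (2 * n - 2 * n) := by
      rw [Tn, Finset.sum_range_succ]
    have h2 : ((2 * n).choose (2 * n) : ℝ) * E a (2 * n - 2 * n) = 1 := by
      simp [E]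
    rw [h2] at h
    linarith
  rw [hT]
  ring

theorem stmt8 (a : ℝ) (ha : a ≠ 0) (ha2 : a ≠ 1 / 2) (n : ℕ) (hn : 1 ≤ n) :
    E a (2 * n) = a / (2 * a - 1) - a ^ 2 * n / (2 * (2 * a - 1)) *
      ∑ k ∈ Finset.Icc 1 n, ((2 * n - 1).choose (2 * k - 1) : ℝ) * (4 ^ k / k) *
        E a (2 * n - 2 * k) := by
  have h21 : (2 * a - 1) ≠ 0 := by
    intro h; apply ha2; linarith
  have hL := double_sum a n
  have hK := key1 a n hn
  have hT := Tn_rec a n hn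
  set S2 := ∑ l ∈ Finset.Icc 1 n, ((2 * n).choose (2 * l) : ℝ) * (4 ^ l / 2) * E a (2 * n - 2 * l) with hS2
  have key : (2 * a - 1) * E a (2 * n) = a - a ^ 2 * S2 := by
    linear_combination (-(a ^ 2)) * hL + a * hK + (a - 1) * hT
  set S := ∑ k ∈ Finset.Icc 1 n, ((2 * n - 1).choose (2 * k - 1) : ℝ) * (4 ^ k / k) *
      E a (2 * n - 2 * k) with hSd
  have hS : (n : ℝ) * S = 2 * S2 := by
    rw [hSd, hS2, Finset.mul_sum, Finset.mul_sum]
    apply Finset.sum_congr rfl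
    intro k hk
    have hk' := Finset.mem_Icc.mp hk
    have hnat : 2 * n * ((2 * n - 1).choose (2 * k - 1)) = (2 * n).choose (2 * k) * (2 * k) := by
      have h := Nat.add_one_mul_choose_eq (2 * n - 1) (2 * k - 1)
      have e1 : 2 * n - 1 + 1 = 2 * n := by omega
      have e2 : 2 * k - 1 + 1 = 2 * k := by omega
      rw [e1, e2] at h
      exact h
    have hr : (n : ℝ) * ((2 * n - 1).choose (2 * k - 1) : ℝ) = ((2 * n).choose (2 * k) : ℝ) * k := by
      have hc := congrArg (fun m : ℕ => (m : ℝ)) hnat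
      push_cast at hc
      linarith
    have hk0 : (k : ℝ) ≠ 0 := by
      have : 1 ≤ k := hk'.1
      positivity
    field_simp
    linear_combination E a (2 * n - 2 * k) * hr
  have hd : (2 * a - 1) * (2 * a - 1)⁻¹ = 1 := mul_inv_cancel₀ h21
  rw [div_eq_mul_inv _ (2 * (2 * a - 1)), mul_inv]
  linear_combination (2 * a - 1)⁻¹ * key + (a ^ 2 * (2 : ℝ)⁻¹ * (2 * a - 1)⁻¹) * hS - E a (2 * n) * hd
end
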